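/- Let n and k be positive integers, let δ ∈ (0,1], and let B₁, …, B_k ⊆ [1, n] ∩ ℤ with |Bᵢ| ≥ δ·n for each i. Then there exist integers t₁, …, t_k such that |(B₁ + t₁) ∩ (B₂ + t₂) ∩ ⋯ ∩ (B_k + t_k)| ≥ (δᵏ/2^{k−1})·n. -/

import Mathlib

open Finset

/-- Averaging lemma: two subsets of `[1,n]` have a translate with large overlap. -/
lemma step_lemma (n : ℕ) (hn : 0 < n) (A C : Finset ℤ)
    (hA : A ⊆ Finset.Icc 1 (n : ℤ)) (hC : C ⊆ Finset.Icc 1 (n : ℤ)) :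
    ∃ t : ℤ, (A.card : ℝ) * C.card / (2 * n) ≤ ((A ∩ C.image (· + t)).card : ℝ) := by
  set T : Finset ℤ := Finset.Icc (1 - (n : ℤ)) ((n : ℤ) - 1) with hT
  have hmap : ∀ p ∈ A ×ˢ C, p.1 - p.2 ∈ T := by
    rintro ⟨a, c⟩ hp
    rw [Finset.mem_product] at hp
    have h1 := hA hp.1
    have h2 := hC hp.2
    simp only [hT, Finset.mem_Icc] at h1 h2 ⊢
    omega
  have hsum : (A ×ˢ C).card = ∑ t ∈ T, ((A ×ˢ C).filter (fun p => p.1 - p.2 = t)).card :=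
    Finset.card_eq_sum_card_fiberwise hmap
  have hfiber : ∀ t : ℤ,
      ((A ×ˢ C).filter (fun p => p.1 - p.2 = t)).card = (A ∩ C.image (· + t)).card := by
    intro t
    apply Finset.card_nbij' (fun p => p.1) (fun a => (a, a - t))
    · rintro ⟨a, c⟩ hp
      simp only [Finset.mem_coe, Finset.mem_filter, Finset.mem_product] at hp
      simp only [Finset.mem_coe, Finset.mem_inter, Finset.mem_image]
      exact ⟨hp.1.1, c, hp.1.2, by omega⟩
    · intro a ha
      simp only [Finset.mem_coe, Finset.mem_inter, Finset.mem_image] at ha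
      obtain ⟨ha1, c, hc, hct⟩ := ha
      simp only [Finset.mem_coe, Finset.mem_filter, Finset.mem_product]
      refine ⟨⟨ha1, ?_⟩, by ring⟩
      have : a - t = c := by omega
      rwa [this]
    · rintro ⟨a, c⟩ hp
      simp only [Finset.mem_coe, Finset.mem_filter] at hp
      have : a - t = c := by omega
      simp [this]
    · intro a _; rfl
  have hne : T.Nonempty := ⟨0, by simp only [hT, Finset.mem_Icc]; omega⟩
  have hpigeon : ∃ t ∈ T, (A ×ˢ C).card ≤ T.card * (A ∩ C.image (· + t)).card := by
    by_contra h
    push_neg at h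
    have hlt : ∑ t ∈ T, T.card * (A ∩ C.image (· + t)).card
        < ∑ _t ∈ T, (A ×ˢ C).card :=
      Finset.sum_lt_sum_of_nonempty hne (fun t ht => h t ht)
    rw [← Finset.mul_sum, Finset.sum_const, smul_eq_mul] at hlt
    have heq : ∑ t ∈ T, (A ∩ C.image (· + t)).card = (A ×ˢ C).card :=
      (Finset.sum_congr rfl fun t _ => (hfiber t).symm).trans hsum.symm
    rw [heq] at hlt
    exact lt_irrefl _ hlt
  obtain ⟨t, htT, ht⟩ := hpigeon
  refine ⟨t, ?_⟩
  have hTcard : T.card ≤ 2 * n := by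
    rw [hT, Int.card_Icc]
    omega
  have hcards : A.card * C.card ≤ 2 * n * (A ∩ C.image (· + t)).card := by
    calc A.card * C.card = (A ×ˢ C).card := (Finset.card_product A C).symm
      _ ≤ T.card * (A ∩ C.image (· + t)).card := ht
      _ ≤ 2 * n * (A ∩ C.image (· + t)).card := Nat.mul_le_mul_right _ hTcard
  have h2n : (0 : ℝ) < 2 * n := by positivity
  rw [div_le_iff₀ h2n]
  calc (A.card : ℝ) * C.card = ((A.card * C.card : ℕ) : ℝ) := by push_cast; ring
    _ ≤ ((2 * n * (A ∩ C.image (· + t)).card : ℕ) : ℝ) := by exact_mod_cast hcards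
    _ = ((A ∩ C.image (· + t)).card : ℝ) * (2 * n) := by push_cast; ring


/-- Induction: translates of `B₀,…,B_m` with large common intersection, staying in `[1,n]`. -/
lemma aux_lemma (n : ℕ) (hn : 0 < n) (δ : ℝ) (hδ0 : 0 < δ) :
    ∀ m (B : Fin (m + 1) → Finset ℤ), (∀ i, B i ⊆ Finset.Icc 1 (n : ℤ)) →
      (∀ i, δ * n ≤ ((B i).card : ℝ)) →
      ∃ (t : Fin (m + 1) → ℤ) (D : Finset ℤ),
        (D : Set ℤ) = ⋂ i, (fun b => b + t i) '' ((B i : Set ℤ)) ∧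
        D ⊆ Finset.Icc 1 (n : ℤ) ∧
        δ ^ (m + 1) / 2 ^ m * n ≤ (D.card : ℝ) := by
  intro m
  induction m with
  | zero =>
    intro B hB hc
    refine ⟨fun _ => 0, B 0, ?_, hB 0, by simpa using hc 0⟩
    ext x
    simp [Fin.forall_fin_one]
  | succ m ih =>
    intro B hB hc
    obtain ⟨t', D', hcoe', hsub', hcard'⟩ := ih (fun i => B i.succ) (fun i => hB _) (fun i => hc _)
    obtain ⟨s, hs⟩ := step_lemma n hn D' (B 0) hsub' (hB 0)
    refine ⟨Fin.cases s t', D' ∩ (B 0).image (· + s), ?_, ?_, ?_⟩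
    · ext x
      have hx : x ∈ (D' : Set ℤ) ↔ ∀ i : Fin (m + 1), x ∈ (fun b => b + t' i) '' ((B i.succ : Set ℤ)) := by
        rw [hcoe']; simp [Set.mem_iInter]
      simp only [Finset.coe_inter, Set.mem_inter_iff, Set.mem_iInter, Fin.forall_fin_succ,
        Fin.cases_zero, Fin.cases_succ, Finset.coe_image, Finset.mem_coe, hx]
      tauto
    · exact (Finset.inter_subset_left).trans hsub'
    · have hδn : (0:ℝ) ≤ δ * n := by positivity
      have hnum : δ ^ (m + 1) / 2 ^ m * n * (δ * n) ≤ (D'.card : ℝ) * (B 0).card :=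
        mul_le_mul hcard' (hc 0) hδn (Nat.cast_nonneg _)
      have h2n : (0:ℝ) < 2 * n := by positivity
      have key : δ ^ (m + 1 + 1) / 2 ^ (m + 1) * n
          = δ ^ (m + 1) / 2 ^ m * n * (δ * n) / (2 * n) := by
        have hn0 : (n:ℝ) ≠ 0 := Nat.cast_ne_zero.mpr hn.ne'
        field_simp
        ring
      rw [key]
      calc δ ^ (m + 1) / 2 ^ m * n * (δ * n) / (2 * n)
          ≤ (D'.card : ℝ) * (B 0).card / (2 * n) := div_le_div_of_nonneg_right hnum h2n.le
        _ ≤ _ := hs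

theorem exists_translates_large_common_inter (n k : ℕ) (hn : 0 < n) (hk : 0 < k)
    (δ : ℝ) (hδ : δ ∈ Set.Ioc (0 : ℝ) 1)
    (B : Fin k → Finset ℤ) (hB : ∀ i, B i ⊆ Finset.Icc 1 (n : ℤ))
    (hBcard : ∀ i, δ * (n : ℝ) ≤ ((B i).card : ℝ)) :
    ∃ t : Fin k → ℤ,
      δ ^ k / 2 ^ (k - 1) * (n : ℝ) ≤
        ((⋂ i, (fun b => b + t i) '' ((B i : Set ℤ))).ncard : ℝ) := by
  obtain ⟨m, rfl⟩ := Nat.exists_eq_succ_of_ne_zero hk.ne'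
  obtain ⟨t, D, hcoe, _, hcard⟩ := aux_lemma n hn δ hδ.1 m B hB hBcard
  refine ⟨t, ?_⟩
  rw [← hcoe, Set.ncard_coe_finset]
  simpa using hcard
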